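/- Let H be a real Hilbert space, T > 0, ρ ∈ (0,∞], and let C : [0,T] ⇉ H satisfy (H₁), (H₂), and (H₃). Let x : [0,T] → H be an admissible trajectory for C, and assume its differential measure dx is absolutely continuous with respect to a complete positive Radon measure ν on [0,T], with density v ∈ L¹_ν([0,T];H). Then the class A_ν of continuous maps y : [0,T] → H with y(t) ∈ C(t) for ν-a.e. t ∈ [0,T] is nonempty, and the variational residual satisfies E_ν(x) ≤ 0; that is, for every ε > 0 there exists y ∈ A_ν such that ∫₀ᵀ [⟨v(t), y(t) − x(t)⟩ + (‖v(t)‖/(2ρ))‖y(t) − x(t)‖²] dν(t) < ε. -/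

import Mathlib

open MeasureTheory Set Metric Filter Topology
open scoped RealInnerProductSpace ENNReal

/-- The proximal normal cone of `S` at `x`: `ζ ∈ N^P(S;x)` iff there are `σ ≥ 0`, `η > 0`
with `⟪ζ, y - x⟫ ≤ σ‖y - x‖²` for all `y ∈ S` with `‖y - x‖ < η`. -/
def ProxNormalCone {H : Type*} [NormedAddCommGroup H] [InnerProductSpace ℝ H]
    (S : Set H) (x : H) : Set H :=
  {ζ : H | ∃ σ : ℝ, 0 ≤ σ ∧ ∃ η : ℝ, 0 < η ∧
    ∀ y ∈ S, ‖y - x‖ < η → ⟪ζ, y - x⟫ ≤ σ * ‖y - x‖ ^ 2}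

/-- `ρ`-uniform prox-regularity, with `ρ ∈ (0,∞]` encoded in `ℝ≥0∞`.
For `ρ = ∞` one has `‖ζ‖ / (2 * ρ.toReal) = ‖ζ‖ / 0 = 0`, recovering the convex inequality. -/
def UniformlyProxRegular {H : Type*} [NormedAddCommGroup H] [InnerProductSpace ℝ H]
    (ρ : ℝ≥0∞) (S : Set H) : Prop :=
  ∀ x ∈ S, ∀ ζ ∈ ProxNormalCone S x, ∀ x' ∈ S,
    ⟪ζ, x' - x⟫ ≤ ‖ζ‖ / (2 * ρ.toReal) * ‖x' - x‖ ^ 2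

/-- Lower semicontinuity of a set-valued map on a set `A`: for every `a ∈ A` and open `U`
meeting `C a`, the set of points of `A` where `C` meets `U` is a neighborhood of `a` in `A`. -/
def LscOn {α β : Type*} [TopologicalSpace α] [TopologicalSpace β]
    (C : α → Set β) (A : Set α) : Prop :=
  ∀ a ∈ A, ∀ U : Set β, IsOpen U → (C a ∩ U).Nonempty →
    {a' | a' ∈ A ∧ (C a' ∩ U).Nonempty} ∈ nhdsWithin a A

/-- Admissible trajectory for a moving set `C` on `[0,T]`: right-continuous, of bounded
variation, with `x 0 ∈ C 0` and `x t ∈ C t` for all `t ∈ [0,T]`. -/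
def AdmissibleTrajectory {E : Type*} [NormedAddCommGroup E]
    (C : ℝ → Set E) (T : ℝ) (x : ℝ → E) : Prop :=
  (∀ t ∈ Icc (0:ℝ) T, ContinuousWithinAt x (Ici t) t) ∧
    BoundedVariationOn x (Icc (0:ℝ) T) ∧ x 0 ∈ C 0 ∧ ∀ t ∈ Icc (0:ℝ) T, x t ∈ C t

/-- The differential measure `dx` is absolutely continuous w.r.t. `ν` with density
`v ∈ L¹_ν`: `x t = x 0 + ∫_{(0,t]} v dν` for all `t ∈ [0,T]`. -/
def HasDensity {E : Type*} [NormedAddCommGroup E] [NormedSpace ℝ E]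
    (T : ℝ) (ν : Measure ℝ) (x v : ℝ → E) : Prop :=
  Integrable v ν ∧ ∀ t ∈ Icc (0:ℝ) T, x t = x 0 + ∫ s in Ioc (0:ℝ) t, v s ∂ν

/-- A (complete) positive Radon measure on `[0,T]`: a finite inner regular Borel measure
carried by `[0,T]`. -/
def IsRadonOn (ν : Measure ℝ) (T : ℝ) : Prop :=
  IsFiniteMeasure ν ∧ ν.InnerRegular ∧ ν ((Icc (0:ℝ) T)ᶜ) = 0

/-- The bounded selection-extension property (H₃). -/
def SelectionExtension {E : Type*} [NormedAddCommGroup E] (C : ℝ → Set E) (T : ℝ) : Prop :=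
  ∀ x : ℝ → E, (∃ M : ℝ, ∀ t ∈ Icc (0:ℝ) T, ‖x t‖ ≤ M) →
    (∀ t ∈ Icc (0:ℝ) T, x t ∈ C t) → ∀ η : ℝ, 0 < η →
    ∃ R : ℝ, 0 < R ∧
      ∀ K : Set ℝ, IsCompact K → K ⊆ Icc (0:ℝ) T →
        ∀ y : ℝ → E, ContinuousOn y K → (∀ t ∈ K, y t ∈ C t) →
          (∀ t ∈ K, ‖y t - x t‖ ≤ η) →
          ∃ ybar : ℝ → E, ContinuousOn ybar (Icc (0:ℝ) T) ∧
            (∀ t ∈ Icc (0:ℝ) T, ybar t ∈ C t) ∧ (∀ t ∈ K, ybar t = y t) ∧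
            ∀ t ∈ Icc (0:ℝ) T, ‖ybar t‖ ≤ R

/-- Hypothesis (H₁): each `C t` is nonempty, closed, connected and `ρ`-uniformly prox-regular. -/
def HypH1 {H : Type*} [NormedAddCommGroup H] [InnerProductSpace ℝ H]
    (ρ : ℝ≥0∞) (C : ℝ → Set H) (T : ℝ) : Prop :=
  ∀ t ∈ Icc (0:ℝ) T, (C t).Nonempty ∧ IsClosed (C t) ∧ IsConnected (C t) ∧
    UniformlyProxRegular ρ (C t)

/-- Under (H₁)-(H₃), for any admissible trajectory `x` whose differential
measure has density `v` w.r.t. a Radon measure `ν` on `[0,T]`, the class `A_ν` of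
continuous a.e.-selections of `C` is nonempty, and the variational residual satisfies
`E_ν(x) ≤ 0`: for every `ε > 0` some test trajectory makes the integral `< ε`. -/
theorem testClass_nonempty_and_residual_nonpos
    {H : Type*} [NormedAddCommGroup H] [InnerProductSpace ℝ H] [CompleteSpace H]
    (T : ℝ) (hT : 0 < T) (ρ : ℝ≥0∞) (hρ : 0 < ρ) (C : ℝ → Set H)
    (hC1 : HypH1 ρ C T) (hC2 : LscOn C (Icc (0:ℝ) T)) (hC3 : SelectionExtension C T)
    (ν : Measure ℝ) (hν : IsRadonOn ν T)
    (x v : ℝ → H) (hadm : AdmissibleTrajectory C T x) (hdens : HasDensity T ν x v) :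
    (∃ y : ℝ → H, ContinuousOn y (Icc (0:ℝ) T) ∧ ∀ᵐ t ∂ν, y t ∈ C t) ∧
      ∀ ε : ℝ, 0 < ε → ∃ y : ℝ → H, ContinuousOn y (Icc (0:ℝ) T) ∧
        (∀ᵐ t ∂ν, y t ∈ C t) ∧
        ∫ t in Icc (0:ℝ) T,
          (⟪v t, y t - x t⟫ + ‖v t‖ / (2 * ρ.toReal) * ‖y t - x t‖ ^ 2) ∂ν < ε := by
  
  classical
  obtain ⟨hνfin, hνreg, hνcarr⟩ := hν
  haveI := hνfin
  obtain ⟨hvi, hxint⟩ := hdens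
  set I : Set ℝ := Icc (0:ℝ) T with hIdef
  have hImeas : MeasurableSet I := measurableSet_Icc
  -- strongly measurable representative of v
  obtain ⟨w, hw, hvw⟩ : ∃ w : ℝ → H, StronglyMeasurable w ∧ v =ᵐ[ν] w :=
    ⟨hvi.1.mk v, hvi.1.stronglyMeasurable_mk, hvi.1.ae_eq_mk⟩
  set μ : Measure ℝ := ν.withDensity (fun t => (‖w t‖₊ : ℝ≥0∞)) with hμdef
  have hwlint : ∫⁻ t, (‖w t‖₊ : ℝ≥0∞) ∂ν = ∫⁻ t, (‖v t‖₊ : ℝ≥0∞) ∂ν :=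
    lintegral_congr_ae ((hvw.symm.fun_comp (fun y : H => (‖y‖₊ : ℝ≥0∞))))
  haveI : IsFiniteMeasure μ :=
    isFiniteMeasure_withDensity (by rw [hwlint]; exact hvi.2.ne)
  -- set integrals of ‖v‖ are μ-measures
  have hμs : ∀ S : Set ℝ, MeasurableSet S → ∫ t in S, ‖v t‖ ∂ν = (μ S).toReal := by
    intro S hS
    rw [hμdef, withDensity_apply _ hS]
    have h1 : ∫ t in S, ‖v t‖ ∂ν = ∫ t in S, ‖w t‖ ∂ν :=
      integral_congr_ae (ae_restrict_of_ae (hvw.fun_comp (fun y : H => ‖y‖)))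
    rw [h1]
    exact integral_norm_eq_lintegral_enorm hw.aestronglyMeasurable.restrict
  -- key estimate
  have key : ∀ s t : ℝ, s ∈ I → t ∈ I → s ≤ t → ‖x t - x s‖ ≤ (μ (Ioc s t)).toReal := by
    intro s t hs ht hst
    have hu : Ioc (0:ℝ) s ∪ Ioc s t = Ioc 0 t := Ioc_union_Ioc_eq_Ioc hs.1 hst
    have hsplit : ∫ u in Ioc (0:ℝ) t, v u ∂ν
        = (∫ u in Ioc (0:ℝ) s, v u ∂ν) + ∫ u in Ioc s t, v u ∂ν := by
      rw [← hu]
      exact setIntegral_union (Ioc_disjoint_Ioc_of_le le_rfl) measurableSet_Ioc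
        hvi.integrableOn hvi.integrableOn
    have hxt : x t - x s = ∫ u in Ioc s t, v u ∂ν := by
      rw [hxint t ht, hxint s hs, hsplit]; abel
    rw [hxt, ← hμs _ measurableSet_Ioc]
    exact norm_integral_le_integral_norm v
  -- uniform bound on x
  set M : ℝ := ‖x 0‖ + (μ univ).toReal with hMdef
  have hM0 : 0 ≤ M := add_nonneg (norm_nonneg _) ENNReal.toReal_nonneg
  have h0I : (0:ℝ) ∈ I := ⟨le_refl 0, hT.le⟩
  have hM : ∀ t ∈ I, ‖x t‖ ≤ M := by
    intro t ht
    calc ‖x t‖ = ‖x 0 + (x t - x 0)‖ := by rw [add_sub_cancel]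
      _ ≤ ‖x 0‖ + ‖x t - x 0‖ := norm_add_le _ _
      _ ≤ ‖x 0‖ + (μ (Ioc 0 t)).toReal := by
          have := key 0 t h0I ht ht.1
          linarith
      _ ≤ M := by
          rw [hMdef]
          have : (μ (Ioc 0 t)).toReal ≤ (μ univ).toReal :=
            ENNReal.toReal_mono (measure_ne_top _ _) (measure_mono (subset_univ _))
          linarith
  have hxC : ∀ t ∈ I, x t ∈ C t := hadm.2.2.2
  obtain ⟨R, hR0, hRext⟩ := hC3 x ⟨M, hM⟩ hxC 1 one_pos
  -- a.e. membership from membership on I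
  have aeCof : ∀ y : ℝ → H, (∀ t ∈ I, y t ∈ C t) → ∀ᵐ t ∂ν, y t ∈ C t := by
    intro y hy
    rw [ae_iff]
    refine measure_mono_null ?_ hνcarr
    intro t ht
    simp only [mem_setOf_eq] at ht
    intro htI
    exact ht (hy t htI)
  -- first part: nonemptiness
  obtain ⟨y0, hy0c, hy0C, -, -⟩ := hRext ∅ isCompact_empty (empty_subset _) x
    (continuousOn_empty _) (by simp) (by simp)
  refine ⟨⟨y0, hy0c, aeCof y0 hy0C⟩, ?_⟩
  -- second part
  intro ε hε
  set B : ℝ := R + M with hBdef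
  have hB0 : 0 < B := by positivity
  set c : ℝ := B + B ^ 2 / (2 * ρ.toReal) with hcdef
  have hc0 : 0 ≤ c := by positivity
  set ε' : ℝ≥0∞ := ENNReal.ofReal (ε / (2 * (c + 1))) with hε'def
  have hε'0 : ε' ≠ 0 := (ENNReal.ofReal_pos.2 (by positivity)).ne'
  have hε'top : ε' ≠ ∞ := ENNReal.ofReal_ne_top
  -- shrinking intervals have small measure
  have shrink : ∀ (s : ℝ) (η : ℝ≥0∞), η ≠ 0 → ∃ δ : ℝ, 0 < δ ∧ μ (Ioo (s - δ) s) < η := by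
    intro s η hη
    have hAnt : Antitone (fun m : ℕ => Ioo (s - 1 / (m + 1 : ℝ)) s) := by
      intro a b hab
      apply Ioo_subset_Ioo _ le_rfl
      have h1 : (1:ℝ) / (b + 1) ≤ 1 / (a + 1) := by
        apply one_div_le_one_div_of_le (by positivity)
        exact_mod_cast add_le_add_left (Nat.cast_le.2 hab) 1
      linarith
    have hint : ⋂ m : ℕ, Ioo (s - 1 / (m + 1 : ℝ)) s = ∅ := by
      ext u
      simp only [mem_iInter, mem_Ioo, mem_empty_iff_false, iff_false, not_forall]
      by_contra hcon
      push_neg at hcon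
      obtain ⟨m, hm⟩ := exists_nat_one_div_lt (show (0:ℝ) < s - u from sub_pos.2 (hcon 0).2)
      have := (hcon m).1
      have hm' : 1 / ((m:ℝ) + 1) < s - u := hm
      linarith
    have ht := tendsto_measure_iInter_atTop (μ := μ)
      (fun m => measurableSet_Ioo.nullMeasurableSet) hAnt ⟨0, measure_ne_top _ _⟩
    rw [hint, measure_empty] at ht
    obtain ⟨m, hm⟩ := (ht.eventually_lt_const (pos_iff_ne_zero.2 hη)).exists
    exact ⟨1 / (m + 1 : ℝ), by positivity, hm⟩
  -- atoms are countable
  have hDcnt : Set.Countable {t : ℝ | 0 < μ {t}} :=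
    Measure.countable_meas_pos_of_disjoint_iUnion
      (fun t : ℝ => measurableSet_singleton t)
      (fun a b hab => by simp only [Function.onFun]; exact disjoint_singleton.2 hab)
  set D' : Set ℝ := insert 0 ({t : ℝ | 0 < μ {t}} ∩ I) with hD'def
  obtain ⟨f, hf⟩ := ((hDcnt.mono inter_subset_left).insert 0).exists_eq_range
    (insert_nonempty _ _)
  choose δf hδf0 hδfμ using fun n : ℕ => shrink (f n) (ε' / 2 * 2⁻¹ ^ n)
    (by
      apply ne_of_gt
      apply ENNReal.mul_pos
      · exact (ENNReal.div_pos hε'0 ENNReal.ofNat_ne_top).ne'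
      · exact (pow_ne_zero n (ENNReal.inv_ne_zero.2 ENNReal.ofNat_ne_top)))
  set U : Set ℝ := ⋃ n, Ioo (f n - δf n) (f n) with hUdef
  have hUopen : IsOpen U := isOpen_iUnion fun n => isOpen_Ioo
  have hUμ : μ U ≤ ε' := by
    calc μ U ≤ ∑' n, μ (Ioo (f n - δf n) (f n)) := measure_iUnion_le _
      _ ≤ ∑' n, ε' / 2 * 2⁻¹ ^ n := ENNReal.tsum_le_tsum fun n => (hδfμ n).le
      _ = ε' / 2 * (1 - 2⁻¹)⁻¹ := by rw [ENNReal.tsum_mul_left, ENNReal.tsum_geometric]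
      _ = ε' := by
          rw [ENNReal.one_sub_inv_two, inv_inv]
          exact ENNReal.div_mul_cancel two_ne_zero ENNReal.ofNat_ne_top
  set K : Set ℝ := I \ U with hKdef
  have hKI : K ⊆ I := diff_subset
  have hKclosed : IsClosed K := by
    rw [hKdef, diff_eq]
    exact isClosed_Icc.inter (isClosed_compl_iff.2 hUopen)
  have hKcmp : IsCompact K := isCompact_Icc.of_isClosed_subset hKclosed hKI
  -- x is continuous on K
  have hxK : ContinuousOn x K := by
    intro s hs
    have hsI : s ∈ I := hKI hs
    have hright : ContinuousWithinAt x (Ici s) s := hadm.1 s hsI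
    have hleft : ContinuousWithinAt x (K ∩ Iio s) s := by
      by_cases hatom : 0 < μ {s}
      · obtain ⟨n, hn⟩ : s ∈ range f := by
          rw [← hf]; exact mem_insert_of_mem _ ⟨hatom, hsI⟩
        apply continuousWithinAt_of_notMem_closure
        rw [_root_.mem_closure_iff]
        push_neg
        refine ⟨Ioi (s - δf n), isOpen_Ioi, by simp [hδf0 n], ?_⟩
        rw [eq_empty_iff_forall_notMem]
        rintro u ⟨hu1, hu2, hu3⟩
        apply hu2.2
        rw [hUdef]
        exact mem_iUnion.2 ⟨n, by rw [hn]; exact ⟨hu1, hu3⟩⟩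
      · have hμs0 : μ {s} = 0 := by
          by_contra hne
          exact hatom (pos_iff_ne_zero.2 hne)
        rw [Metric.continuousWithinAt_iff]
        intro η hη
        obtain ⟨δ, hδ0, hδμ⟩ := shrink s (ENNReal.ofReal η) (ENNReal.ofReal_pos.2 hη).ne'
        refine ⟨δ, hδ0, ?_⟩
        intro u hu hud
        have huI : u ∈ I := hKI hu.1
        have hus : u < s := hu.2
        have hsδ : s - δ < u := by
          rw [Real.dist_eq] at hud
          have := (abs_lt.1 hud).1
          linarith
        have hsub : Ioc u s ⊆ Ioo (s - δ) s ∪ {s} := by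
          intro z hz
          rcases eq_or_lt_of_le hz.2 with h | h
          · exact Or.inr (by simp [h])
          · exact Or.inl ⟨by linarith [hz.1], h⟩
        have hm : μ (Ioc u s) < ENNReal.ofReal η := by
          calc μ (Ioc u s) ≤ μ (Ioo (s - δ) s ∪ {s}) := measure_mono hsub
            _ ≤ μ (Ioo (s - δ) s) + μ {s} := measure_union_le _ _
            _ = μ (Ioo (s - δ) s) := by rw [hμs0, add_zero]
            _ < ENNReal.ofReal η := hδμ
        rw [dist_eq_norm]
        calc ‖x u - x s‖ = ‖x s - x u‖ := norm_sub_rev _ _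
          _ ≤ (μ (Ioc u s)).toReal := key u s huI hsI hus.le
          _ < η := (ENNReal.lt_ofReal_iff_toReal_lt (measure_ne_top _ _)).1 hm
    refine (hleft.union hright).mono ?_
    intro u hu
    rcases lt_or_ge u s with h | h
    · exact Or.inl ⟨hu, h⟩
    · exact Or.inr h
  -- extend to a continuous selection agreeing with x on K
  obtain ⟨y, hyc, hyC, hyK, hyR⟩ := hRext K hKcmp hKI x hxK
    (fun t ht => hxC t (hKI ht)) (fun t ht => by simp)
  have hyx : ∀ t ∈ I, ‖y t - x t‖ ≤ B := fun t ht =>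
    (norm_sub_le _ _).trans (add_le_add (hyR t ht) (hM t ht))
  set g : ℝ → ℝ := fun t => ⟪v t, y t - x t⟫ + ‖v t‖ / (2 * ρ.toReal) * ‖y t - x t‖ ^ 2
    with hgdef
  have habs : ∀ t ∈ I, |g t| ≤ c * ‖v t‖ := by
    intro t ht
    have h1 : |⟪v t, y t - x t⟫| ≤ ‖v t‖ * B :=
      (abs_real_inner_le_norm _ _).trans
        (mul_le_mul_of_nonneg_left (hyx t ht) (norm_nonneg _))
    have h2 : |‖v t‖ / (2 * ρ.toReal) * ‖y t - x t‖ ^ 2|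
        ≤ ‖v t‖ / (2 * ρ.toReal) * B ^ 2 := by
      rw [abs_of_nonneg (by positivity)]
      exact mul_le_mul_of_nonneg_left
        (pow_le_pow_left₀ (norm_nonneg _) (hyx t ht) 2) (by positivity)
    calc |g t| ≤ |⟪v t, y t - x t⟫| + |‖v t‖ / (2 * ρ.toReal) * ‖y t - x t‖ ^ 2| :=
          abs_add_le _ _
      _ ≤ ‖v t‖ * B + ‖v t‖ / (2 * ρ.toReal) * B ^ 2 := add_le_add h1 h2
      _ = c * ‖v t‖ := by rw [hcdef]; ring
  -- measurability of x on I
  have hset : MeasurableSet {p : ℝ × ℝ | 0 < p.2 ∧ p.2 ≤ p.1} :=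
    (measurableSet_lt measurable_const measurable_snd).inter
      (measurableSet_le measurable_snd measurable_fst)
  have hXmeas : StronglyMeasurable (fun t : ℝ => x 0 +
      ∫ s, Set.indicator {p : ℝ × ℝ | 0 < p.2 ∧ p.2 ≤ p.1} (fun p => w p.2) (t, s) ∂ν) :=
    stronglyMeasurable_const.add
      (StronglyMeasurable.integral_prod_right'
        ((hw.comp_measurable measurable_snd).indicator hset))
  have hxae : AEStronglyMeasurable x (ν.restrict I) := by
    apply hXmeas.aestronglyMeasurable.congr
    apply ae_restrict_of_forall_mem hImeas
    intro t ht
    show x 0 + ∫ s, Set.indicator {p : ℝ × ℝ | 0 < p.2 ∧ p.2 ≤ p.1} (fun p => w p.2) (t, s) ∂ν = x t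
    have hind : (fun s : ℝ =>
        Set.indicator {p : ℝ × ℝ | 0 < p.2 ∧ p.2 ≤ p.1} (fun p => w p.2) (t, s))
        = (Ioc (0:ℝ) t).indicator w := by
      funext s
      simp [Set.indicator_apply, mem_Ioc, mem_setOf_eq]
    rw [hind, integral_indicator measurableSet_Ioc]
    have h3 : ∫ s in Ioc (0:ℝ) t, w s ∂ν = ∫ s in Ioc (0:ℝ) t, v s ∂ν :=
      integral_congr_ae (ae_restrict_of_ae hvw.symm)
    rw [h3, ← hxint t ht]
  have hvae : AEStronglyMeasurable v (ν.restrict I) := hvi.1.restrict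
  have hyae : AEStronglyMeasurable y (ν.restrict I) := hyc.aestronglyMeasurable hImeas
  have hdae : AEStronglyMeasurable (fun t => y t - x t) (ν.restrict I) := hyae.sub hxae
  have hgae : AEStronglyMeasurable g (ν.restrict I) := by
    have h2 : AEStronglyMeasurable
        (fun t => ⟪v t, y t - x t⟫ +
          ‖v t‖ * (‖y t - x t‖ * ‖y t - x t‖) * (2 * ρ.toReal)⁻¹) (ν.restrict I) :=
      (hvae.inner hdae).add
        (((hvae.norm.mul (hdae.norm.mul hdae.norm)).mul_const _))
    refine h2.congr (ae_of_all _ fun t => ?_)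
    rw [hgdef]
    simp only []
    rw [pow_two]
    ring
  have hgi : IntegrableOn g I ν := by
    refine Integrable.mono ((hvi.norm.const_mul c).restrict) hgae ?_
    apply ae_restrict_of_forall_mem hImeas
    intro t ht
    rw [Real.norm_eq_abs, Real.norm_eq_abs, abs_of_nonneg (by positivity : (0:ℝ) ≤ c * ‖v t‖)]
    exact habs t ht
  set S : Set ℝ := I ∩ U with hSdef
  have hSmeas : MeasurableSet S := hImeas.inter hUopen.measurableSet
  set h : ℝ → ℝ := S.indicator (fun t => c * ‖v t‖) with hhdef
  have hhi : IntegrableOn h I ν := (((hvi.norm.const_mul c)).indicator hSmeas).restrict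
  have hle : ∀ t ∈ I, g t ≤ h t := by
    intro t ht
    by_cases htK : t ∈ K
    · have h0 : y t = x t := hyK t htK
      have hg0 : g t = 0 := by
        rw [hgdef]
        simp [h0]
      have hh0 : h t = 0 := by
        rw [hhdef]
        apply indicator_of_notMem
        intro hS
        exact htK.2 hS.2
      rw [hg0, hh0]
    · have htS : t ∈ S := by
        refine ⟨ht, ?_⟩
        by_contra htU
        exact htK ⟨ht, htU⟩
      rw [hhdef, indicator_of_mem htS]
      exact (le_abs_self _).trans (habs t ht)
  refine ⟨y, hyc, aeCof y hyC, ?_⟩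
  have hfinal : ∫ t in I, g t ∂ν < ε := by
    calc ∫ t in I, g t ∂ν ≤ ∫ t in I, h t ∂ν := setIntegral_mono_on hgi hhi hImeas hle
      _ = ∫ t in I ∩ S, c * ‖v t‖ ∂ν := setIntegral_indicator hSmeas
      _ = c * ∫ t in S, ‖v t‖ ∂ν := by
          rw [inter_eq_self_of_subset_right inter_subset_left, integral_const_mul c _]
      _ = c * (μ S).toReal := by rw [hμs S hSmeas]
      _ ≤ c * (ε / (2 * (c + 1))) := by
          apply mul_le_mul_of_nonneg_left _ hc0
          calc (μ S).toReal ≤ ε'.toReal :=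
                ENNReal.toReal_mono hε'top ((measure_mono inter_subset_right).trans hUμ)
            _ = ε / (2 * (c + 1)) := ENNReal.toReal_ofReal (by positivity)
      _ < ε := by
          rw [mul_div_assoc']
          rw [div_lt_iff₀ (by positivity : (0:ℝ) < 2 * (c + 1))]
          nlinarith
  exact hfinal
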